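/- arXiv:2512.24383 — 5 statements merged into one kernel-verified Lean document; each statement's English description precedes it below -/
import Mathlib

section
/- For any p ≥ 2 and any vectors a, b, c in ℝ^d, one has (a - b) · (|a-c|^{p-2}(a-c) - |b-c|^{p-2}(b-c)) ≥ 2^{2-p} |a-b|^p. -/
open scoped InnerProductSpace

/-- Convexity consequence: `(s+r)^q ≤ 2^(q-1) (s^q + r^q)` for `q ≥ 1`. -/
lemma aux_rpow_add_le (s r q : ℝ) (hs : 0 ≤ s) (hr : 0 ≤ r) (hq : 1 ≤ q) :
    (s + r) ^ q ≤ 2 ^ (q - 1) * (s ^ q + r ^ q) := by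
  have h := NNReal.rpow_add_le_mul_rpow_add_rpow s.toNNReal r.toNNReal hq
  have h' := (NNReal.coe_le_coe).2 h
  push_cast [NNReal.coe_rpow] at h'
  rwa [Real.coe_toNNReal s hs, Real.coe_toNNReal r hr] at h'

/-- The scalar inequality at the heart of the vector inequality. -/
lemma aux_scalar (p s r w : ℝ) (hp : 2 ≤ p) (hs : 0 ≤ s) (hr : 0 ≤ r)
    (hw : 0 ≤ w) (hwsr : w ≤ s + r) :
    2 ^ (2 - p) * w ^ p ≤ (s ^ (p - 2) - r ^ (p - 2)) * (s * s - r * r) / 2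
      + (s ^ (p - 2) + r ^ (p - 2)) * (w * w) / 2 := by
  have hsr : 0 ≤ s + r := by linarith
  have hp2 : (0 : ℝ) ≤ p - 2 := by linarith
  -- basic rpow identities
  have hSs : s ^ (p - 2) * s = s ^ (p - 1) := by
    nth_rewrite 2 [← Real.rpow_one s]
    rw [← Real.rpow_add' hs (ne_of_gt (show (0:ℝ) < p - 2 + 1 by linarith))]
    congr 1; ring
  have hRr : r ^ (p - 2) * r = r ^ (p - 1) := by
    nth_rewrite 2 [← Real.rpow_one r]
    rw [← Real.rpow_add' hr (ne_of_gt (show (0:ℝ) < p - 2 + 1 by linarith))]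
    congr 1; ring
  have hWw : w ^ (p - 2) * (w * w) = w ^ p := by
    rw [← sq, ← Real.rpow_two,
      ← Real.rpow_add' hw (ne_of_gt (show (0:ℝ) < p - 2 + 2 by linarith))]
    congr 1; ring
  have hSRw : (s + r) ^ (p - 2) * ((s + r) * (s + r)) = (s + r) ^ p := by
    rw [← sq, ← Real.rpow_two,
      ← Real.rpow_add' hsr (ne_of_gt (show (0:ℝ) < p - 2 + 2 by linarith))]
    congr 1; ring
  have h2a : (2 : ℝ) ^ (2 - p) * 2 ^ (p - 1) = 2 := by
    rw [← Real.rpow_add (by norm_num : (0:ℝ) < 2)]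
    norm_num
  -- nonnegativity of the "A" term
  have hA : 0 ≤ (s ^ (p - 2) - r ^ (p - 2)) * (s * s - r * r) := by
    rcases le_total s r with h | h
    · have h1 : s ^ (p - 2) ≤ r ^ (p - 2) := Real.rpow_le_rpow hs h hp2
      have h2 : s * s ≤ r * r := mul_self_le_mul_self hs h
      nlinarith
    · have h1 : r ^ (p - 2) ≤ s ^ (p - 2) := Real.rpow_le_rpow hr h hp2
      have h2 : r * r ≤ s * s := mul_self_le_mul_self hr h
      nlinarith
  -- endpoint inequality: 2^(2-p) * (s+r)^p ≤ (s+r) * (s^(p-1) + r^(p-1))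
  have hend : 2 ^ (2 - p) * (s + r) ^ p ≤ (s + r) * (s ^ (p - 1) + r ^ (p - 1)) := by
    have hconv : (s + r) ^ (p - 1) ≤ 2 ^ (p - 2) * (s ^ (p - 1) + r ^ (p - 1)) := by
      have := aux_rpow_add_le s r (p - 1) hs hr (by linarith)
      rwa [show p - 1 - 1 = p - 2 by ring] at this
    have hpw : (s + r) ^ p = (s + r) ^ (p - 1) * (s + r) := by
      nth_rewrite 3 [← Real.rpow_one (s + r)]
      rw [← Real.rpow_add' hsr (ne_of_gt (show (0:ℝ) < p - 1 + 1 by linarith))]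
      congr 1; ring
    have h2b : (2 : ℝ) ^ (2 - p) * 2 ^ (p - 2) = 1 := by
      rw [← Real.rpow_add (by norm_num : (0:ℝ) < 2)]
      norm_num
    have h2pos : (0 : ℝ) < 2 ^ (2 - p) := Real.rpow_pos_of_pos (by norm_num) _
    calc 2 ^ (2 - p) * (s + r) ^ p = 2 ^ (2 - p) * ((s + r) ^ (p - 1) * (s + r)) := by
          rw [hpw]
      _ ≤ 2 ^ (2 - p) * (2 ^ (p - 2) * (s ^ (p - 1) + r ^ (p - 1)) * (s + r)) := by
          apply mul_le_mul_of_nonneg_left _ (le_of_lt h2pos)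
          exact mul_le_mul_of_nonneg_right hconv hsr
      _ = (s + r) * (s ^ (p - 1) + r ^ (p - 1)) := by
          rw [show 2 ^ (2 - p) * (2 ^ (p - 2) * (s ^ (p - 1) + r ^ (p - 1)) * (s + r))
            = (2 ^ (2 - p) * 2 ^ (p - 2)) * ((s ^ (p - 1) + r ^ (p - 1)) * (s + r)) by ring,
            h2b]
          ring
  -- main case split
  have hC : 0 ≤ s ^ (p - 2) + r ^ (p - 2) :=
    add_nonneg (Real.rpow_nonneg hs _) (Real.rpow_nonneg hr _)
  have h2pos : (0 : ℝ) < 2 ^ (2 - p) := Real.rpow_pos_of_pos (by norm_num) _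
  rcases le_or_gt (2 ^ (2 - p) * w ^ (p - 2)) ((s ^ (p - 2) + r ^ (p - 2)) / 2) with h | h
  · -- the quadratic-minus-power term is nonnegative at w
    have : 2 ^ (2 - p) * w ^ p ≤ (s ^ (p - 2) + r ^ (p - 2)) / 2 * (w * w) := by
      calc 2 ^ (2 - p) * w ^ p = (2 ^ (2 - p) * w ^ (p - 2)) * (w * w) := by
            rw [← hWw]; ring
        _ ≤ (s ^ (p - 2) + r ^ (p - 2)) / 2 * (w * w) :=
            mul_le_mul_of_nonneg_right h (mul_self_nonneg w)
    linarith
  · -- the function decreases past its positive root, so bound via the endpoint w = s + r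
    have hwmono : w ^ (p - 2) ≤ (s + r) ^ (p - 2) := Real.rpow_le_rpow hw hwsr hp2
    have hw2 : w * w ≤ (s + r) * (s + r) := mul_self_le_mul_self hw hwsr
    have hstep : 2 ^ (2 - p) * w ^ p - (s ^ (p - 2) + r ^ (p - 2)) / 2 * (w * w)
        ≤ 2 ^ (2 - p) * (s + r) ^ p - (s ^ (p - 2) + r ^ (p - 2)) / 2 * ((s + r) * (s + r)) := by
      have e1 : 2 ^ (2 - p) * w ^ p - (s ^ (p - 2) + r ^ (p - 2)) / 2 * (w * w)
          = (2 ^ (2 - p) * w ^ (p - 2) - (s ^ (p - 2) + r ^ (p - 2)) / 2) * (w * w) := by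
        rw [← hWw]; ring
      have e2 : 2 ^ (2 - p) * (s + r) ^ p
            - (s ^ (p - 2) + r ^ (p - 2)) / 2 * ((s + r) * (s + r))
          = (2 ^ (2 - p) * (s + r) ^ (p - 2) - (s ^ (p - 2) + r ^ (p - 2)) / 2)
            * ((s + r) * (s + r)) := by
        rw [← hSRw]; ring
      rw [e1, e2]
      have hpos1 : 0 < 2 ^ (2 - p) * w ^ (p - 2) - (s ^ (p - 2) + r ^ (p - 2)) / 2 := by
        linarith
      calc (2 ^ (2 - p) * w ^ (p - 2) - (s ^ (p - 2) + r ^ (p - 2)) / 2) * (w * w)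
          ≤ (2 ^ (2 - p) * w ^ (p - 2) - (s ^ (p - 2) + r ^ (p - 2)) / 2)
            * ((s + r) * (s + r)) := mul_le_mul_of_nonneg_left hw2 (le_of_lt hpos1)
        _ ≤ (2 ^ (2 - p) * (s + r) ^ (p - 2) - (s ^ (p - 2) + r ^ (p - 2)) / 2)
            * ((s + r) * (s + r)) := by
            apply mul_le_mul_of_nonneg_right _ (mul_self_nonneg (s + r))
            have := mul_le_mul_of_nonneg_left hwmono (le_of_lt h2pos)
            linarith
    -- expansion of the endpoint value
    have hexp : (s ^ (p - 2) - r ^ (p - 2)) * (s * s - r * r) / 2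
        + (s ^ (p - 2) + r ^ (p - 2)) * ((s + r) * (s + r)) / 2
        = (s + r) * (s ^ (p - 1) + r ^ (p - 1)) := by
      rw [← hSs, ← hRr]; ring
    nlinarith [hend, hstep, hexp]

lemma aux_inner {E : Type*} [NormedAddCommGroup E] [InnerProductSpace ℝ E]
    (S R : ℝ) (u v : E) :
    ⟪u - v, S • u - R • v⟫_ℝ
      = S * (‖u‖ * ‖u‖ - ⟪u, v⟫_ℝ) + R * (‖v‖ * ‖v‖ - ⟪u, v⟫_ℝ) := by
  rw [inner_sub_right, inner_sub_left, inner_sub_left, real_inner_smul_right,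
    real_inner_smul_right, real_inner_smul_right, real_inner_smul_right,
    real_inner_self_eq_norm_mul_norm, real_inner_self_eq_norm_mul_norm,
    real_inner_comm v u]
  ring

theorem elementary_vector_inequality (d : ℕ) (p : ℝ) (hp : 2 ≤ p)
    (a b c : EuclideanSpace ℝ (Fin d)) :
    (2 : ℝ) ^ (2 - p) * ‖a - b‖ ^ p ≤
      ⟪a - b, (‖a - c‖ ^ (p - 2)) • (a - c) - (‖b - c‖ ^ (p - 2)) • (b - c)⟫_ℝ := by
  rw [show a - b = (a - c) - (b - c) by abel]
  rw [aux_inner]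
  have hnorm := norm_sub_sq_real (a - c) (b - c)
  simp only [pow_two] at hnorm
  have hkey := aux_scalar p ‖a - c‖ ‖b - c‖ ‖(a - c) - (b - c)‖ hp (norm_nonneg _)
    (norm_nonneg _) (norm_nonneg _) (norm_sub_le _ _)
  have heq : (‖a - c‖ ^ (p - 2) - ‖b - c‖ ^ (p - 2)) * (‖a - c‖ * ‖a - c‖ - ‖b - c‖ * ‖b - c‖) / 2
      + (‖a - c‖ ^ (p - 2) + ‖b - c‖ ^ (p - 2)) * (‖(a - c) - (b - c)‖ * ‖(a - c) - (b - c)‖) / 2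
      = ‖a - c‖ ^ (p - 2) * (‖a - c‖ * ‖a - c‖ - ⟪a - c, b - c⟫_ℝ)
        + ‖b - c‖ ^ (p - 2) * (‖b - c‖ * ‖b - c‖ - ⟪a - c, b - c⟫_ℝ) := by
    linear_combination ((‖a - c‖ ^ (p - 2) + ‖b - c‖ ^ (p - 2)) / 2) * hnorm
  linarith [hkey]
end

section
/- For any p ≥ 2 and any vectors x, y in ℝ^d, one has (x - y) · (|x|^{p-2} x - |y|^{p-2} y) ≥ 2^{2-p} |x-y|^p, and in particular this quantity is nonnegative. -/
set_option maxHeartbeats 1000000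


open scoped InnerProductSpace

-- (a+b)^q ≤ 2^(q-1) (a^q + b^q) for nonneg reals, q ≥ 1
lemma aux_convex {a b q : ℝ} (ha : 0 ≤ a) (hb : 0 ≤ b) (hq : 1 ≤ q) :
    (a + b) ^ q ≤ 2 ^ (q - 1) * (a ^ q + b ^ q) := by
  have h := NNReal.rpow_add_le_mul_rpow_add_rpow ⟨a, ha⟩ ⟨b, hb⟩ hq
  have := NNReal.coe_le_coe.2 h
  push_cast at this
  exact this

lemma aux_rpow_mul {a p : ℝ} (ha : 0 ≤ a) (hp : 2 ≤ p) :
    a ^ (p - 2) * a ^ (2 : ℕ) = a ^ p := by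
  rcases eq_or_lt_of_le ha with h | h
  · rw [← h]
    rw [Real.zero_rpow (by linarith : p ≠ 0)]
    simp
  · rw [← Real.rpow_natCast a 2, ← Real.rpow_add h]
    norm_num

lemma aux_inner_s1 (d : ℕ) (x y : EuclideanSpace ℝ (Fin d)) (P Q : ℝ) :
    ⟪x - y, P • x - Q • y⟫_ℝ = P * ‖x‖ ^ (2:ℕ) + Q * ‖y‖ ^ (2:ℕ) - (P + Q) * ⟪x, y⟫_ℝ := by
  rw [inner_sub_left, inner_sub_right, inner_sub_right, real_inner_smul_right,
    real_inner_smul_right, real_inner_smul_right, real_inner_smul_right,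
    real_inner_self_eq_norm_sq, real_inner_self_eq_norm_sq, real_inner_comm y x]
  ring

theorem monotonicity_power_map (d : ℕ) (p : ℝ) (hp : 2 ≤ p)
    (x y : EuclideanSpace ℝ (Fin d)) :
    (2 : ℝ) ^ (2 - p) * ‖x - y‖ ^ p ≤
      ⟪x - y, (‖x‖ ^ (p - 2)) • x - (‖y‖ ^ (p - 2)) • y⟫_ℝ ∧
    0 ≤ ⟪x - y, (‖x‖ ^ (p - 2)) • x - (‖y‖ ^ (p - 2)) • y⟫_ℝ := by
  set a := ‖x‖ with ha_def
  set b := ‖y‖ with hb_def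
  have ha : 0 ≤ a := norm_nonneg x
  have hb : 0 ≤ b := norm_nonneg y
  set P := a ^ (p - 2) with hP_def
  set Q := b ^ (p - 2) with hQ_def
  have hP : 0 ≤ P := Real.rpow_nonneg ha _
  have hQ : 0 ≤ Q := Real.rpow_nonneg hb _
  set u := ‖x - y‖ with hu_def
  have hu : 0 ≤ u := norm_nonneg _
  set t := ⟪x, y⟫_ℝ with ht_def
  -- expand the inner product
  have hap : a ^ p = P * a ^ (2 : ℕ) := (aux_rpow_mul ha hp).symm
  have hbp : b ^ p = Q * b ^ (2 : ℕ) := (aux_rpow_mul hb hp).symm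
  have hI : ⟪x - y, P • x - Q • y⟫_ℝ = a ^ p + b ^ p - (P + Q) * t := by
    rw [aux_inner_s1 d x y P Q, hap, hbp]
  have hu2 : u ^ (2 : ℕ) = a ^ (2 : ℕ) - 2 * t + b ^ (2 : ℕ) := by
    simpa using @norm_sub_sq_real (EuclideanSpace ℝ (Fin d)) _ _ x y
  -- key identity: 2 I = (P+Q) u² + (P−Q)(a²−b²)
  have hkey : 2 * ⟪x - y, P • x - Q • y⟫_ℝ
      = (P + Q) * u ^ (2 : ℕ) + (P - Q) * (a ^ (2 : ℕ) - b ^ (2 : ℕ)) := by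
    rw [hI, hu2, hap, hbp]
    ring
  have hC : 0 ≤ (P - Q) * (a ^ (2 : ℕ) - b ^ (2 : ℕ)) := by
    rcases le_total a b with h | h
    · have h1 : P ≤ Q := Real.rpow_le_rpow ha h (by linarith)
      have h2 : a ^ (2 : ℕ) ≤ b ^ (2 : ℕ) := pow_le_pow_left₀ ha h 2
      nlinarith
    · have h1 : Q ≤ P := Real.rpow_le_rpow hb h (by linarith)
      have h2 : b ^ (2 : ℕ) ≤ a ^ (2 : ℕ) := pow_le_pow_left₀ hb h 2
      exact mul_nonneg (by linarith) (by linarith)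
  have hub : u ≤ a + b := norm_sub_le x y
  -- main inequality : 2^(3-p) u^p ≤ (P+Q) u² + C
  have hmain : (2 : ℝ) ^ (3 - p) * u ^ p
      ≤ (P + Q) * u ^ (2 : ℕ) + (P - Q) * (a ^ (2 : ℕ) - b ^ (2 : ℕ)) := by
    rcases eq_or_lt_of_le hu with hu0 | hu0
    · rw [← hu0, Real.zero_rpow (by linarith : p ≠ 0)]
      simpa using hC
    have hab : 0 < a + b := lt_of_lt_of_le hu0 hub
    -- endpoint inequality
    have hend : (2 : ℝ) ^ (3 - p) * (a + b) ^ p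
        ≤ (P + Q) * (a + b) ^ (2 : ℕ) + (P - Q) * (a ^ (2 : ℕ) - b ^ (2 : ℕ)) := by
      have hconv : (a + b) ^ (p - 1) ≤ 2 ^ (p - 2) * (a ^ (p - 1) + b ^ (p - 1)) := by
        have := aux_convex ha hb (by linarith : (1:ℝ) ≤ p - 1)
        convert this using 3
        ring
      have h2 : (a + b) ^ p = (a + b) ^ (p - 1) * (a + b) := by
        rw [← Real.rpow_add_one (ne_of_gt hab)]
        norm_num
      have h3 : a ^ (p - 1) = P * a := by
        rcases eq_or_lt_of_le ha with h | h
        · rw [← h, Real.zero_rpow (by linarith : p - 1 ≠ 0)]; ring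
        · rw [hP_def, ← Real.rpow_add_one (ne_of_gt h)]; congr 1; ring
      have h4 : b ^ (p - 1) = Q * b := by
        rcases eq_or_lt_of_le hb with h | h
        · rw [← h, Real.zero_rpow (by linarith : p - 1 ≠ 0)]; ring
        · rw [hQ_def, ← Real.rpow_add_one (ne_of_gt h)]; congr 1; ring
      have h5 : (2 : ℝ) ^ (3 - p) * 2 ^ (p - 2) = 2 := by
        rw [← Real.rpow_add (by norm_num : (0:ℝ) < 2)]
        norm_num
      have h6 : (2 : ℝ) ^ (3 - p) * (a + b) ^ p
          ≤ 2 ^ (3 - p) * ((2 : ℝ) ^ (p - 2) * (a ^ (p - 1) + b ^ (p - 1)) * (a + b)) := by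
        have h7 : (0 : ℝ) < 2 ^ (3 - p) := Real.rpow_pos_of_pos (by norm_num) _
        rw [h2]
        apply mul_le_mul_of_nonneg_left _ (le_of_lt h7)
        exact mul_le_mul_of_nonneg_right hconv (le_of_lt hab)
      calc (2 : ℝ) ^ (3 - p) * (a + b) ^ p
          ≤ 2 ^ (3 - p) * ((2 : ℝ) ^ (p - 2) * (a ^ (p - 1) + b ^ (p - 1)) * (a + b)) := h6
        _ = 2 * ((P * a + Q * b) * (a + b)) := by rw [h3, h4, ← mul_assoc, ← mul_assoc, h5]; ring
        _ = (P + Q) * (a + b) ^ (2 : ℕ) + (P - Q) * (a ^ (2 : ℕ) - b ^ (2 : ℕ)) := by ring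
    -- transfer from endpoint to general u
    have hup : u ^ p = u ^ (p - 2) * u ^ (2 : ℕ) := (aux_rpow_mul hu hp).symm
    have huu : u ^ (p - 2) ≤ (a + b) ^ (p - 2) :=
      Real.rpow_le_rpow hu hub (by linarith)
    set B := (2 : ℝ) ^ (3 - p) * (a + b) ^ (p - 2) with hB_def
    have hBu : (2 : ℝ) ^ (3 - p) * u ^ p ≤ B * u ^ (2 : ℕ) := by
      rw [hup, hB_def]
      have h7 : (0 : ℝ) ≤ 2 ^ (3 - p) := le_of_lt (Real.rpow_pos_of_pos (by norm_num) _)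
      have : u ^ (2:ℕ) ≥ 0 := by positivity
      nlinarith [mul_le_mul_of_nonneg_right huu this.le]
    have hendB : B * (a + b) ^ (2 : ℕ) ≤ (P + Q) * (a + b) ^ (2 : ℕ)
        + (P - Q) * (a ^ (2 : ℕ) - b ^ (2 : ℕ)) := by
      have : B * (a + b) ^ (2 : ℕ) = (2 : ℝ) ^ (3 - p) * (a + b) ^ p := by
        rw [hB_def, mul_assoc, aux_rpow_mul (le_of_lt hab) hp]
      rw [this]; exact hend
    rcases le_total B (P + Q) with hBA | hBA
    · calc (2 : ℝ) ^ (3 - p) * u ^ p ≤ B * u ^ (2 : ℕ) := hBu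
        _ ≤ (P + Q) * u ^ (2 : ℕ) := by
            apply mul_le_mul_of_nonneg_right hBA (by positivity)
        _ ≤ _ := by linarith
    · have hu2ab : u ^ (2 : ℕ) ≤ (a + b) ^ (2 : ℕ) := pow_le_pow_left₀ hu hub 2
      have : (B - (P + Q)) * u ^ (2 : ℕ) ≤ (B - (P + Q)) * (a + b) ^ (2 : ℕ) :=
        mul_le_mul_of_nonneg_left hu2ab (by linarith)
      calc (2 : ℝ) ^ (3 - p) * u ^ p ≤ B * u ^ (2 : ℕ) := hBu
        _ ≤ _ := by nlinarith
  -- conclude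
  have h23 : (2 : ℝ) ^ (3 - p) = 2 * 2 ^ (2 - p) := by
    rw [show (3 : ℝ) - p = 1 + (2 - p) by ring, Real.rpow_add (by norm_num : (0:ℝ) < 2)]
    norm_num
  constructor
  · rw [h23] at hmain
    linarith [hkey, hmain]
  · have hnn : 0 ≤ (2 : ℝ) ^ (2 - p) * u ^ p := by
      have := Real.rpow_nonneg hu p
      have h7 : (0 : ℝ) ≤ 2 ^ (2 - p) := le_of_lt (Real.rpow_pos_of_pos (by norm_num) _)
      positivity
    rw [h23] at hmain
    linarith [hkey, hmain]
end

section
/- Let β > 2 and C > 0. Suppose a, b : [0,∞) → [0,∞) are differentiable with a(0) = a₀, b(0) = b₀, a'(t) ≤ b(t) and b'(t) ≤ C (1+t²)^{-β/2} a(t) for all t ≥ 0. Then there exist constants C₁, C₂ > 0 (depending only on C, β, a₀, b₀) such that b(t) ≤ C₁ and a(t) ≤ a₀ + C₁ t for all t ≥ 0. -/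
theorem aux_lemma_beta_gt_two_sourceless (C β a₀ b₀ : ℝ) (hC : 0 < C) (hβ : 2 < β)
    (a b : ℝ → ℝ) (had : Differentiable ℝ a) (hbd : Differentiable ℝ b)
    (hann : ∀ t, 0 ≤ t → 0 ≤ a t) (hbnn : ∀ t, 0 ≤ t → 0 ≤ b t)
    (ha0 : a 0 = a₀) (hb0 : b 0 = b₀)
    (hab : ∀ t, 0 ≤ t → deriv a t ≤ b t)
    (hba : ∀ t, 0 ≤ t → deriv b t ≤ C * (1 + t ^ 2) ^ (-β / 2) * a t) :
    ∃ C₁ C₂ : ℝ, 0 < C₁ ∧ 0 < C₂ ∧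
      ∀ t, 0 ≤ t → b t ≤ C₁ ∧ a t ≤ a₀ + C₁ * t := by
  have hβ1 : (0:ℝ) < β - 1 := by linarith
  have hβ2 : (0:ℝ) < β - 2 := by linarith
  set K : ℝ := C * 2 ^ (β / 2) / (β - 1) with hKdef
  have hKpos : 0 < K :=
    div_pos (mul_pos hC (Real.rpow_pos_of_pos two_pos _)) hβ1
  -- weight and its antiderivative
  set w : ℝ → ℝ := fun t => K * (1 + t) ^ (1 - β) with hwdef
  set Φ : ℝ → ℝ := fun t => K / (β - 2) * (1 - (1 + t) ^ (2 - β)) with hΦdef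
  set g : ℝ → ℝ := fun t => (b t + w t * a t) * Real.exp (-(Φ t)) with hgdef
  -- basic rpow derivative
  have hbase : ∀ t : ℝ, 0 ≤ t → (0:ℝ) < 1 + t := fun t ht => by linarith
  have hrpow : ∀ (p : ℝ) (t : ℝ), 0 < 1 + t →
      HasDerivAt (fun s : ℝ => (1 + s) ^ p) (p * (1 + t) ^ (p - 1)) t := by
    intro p t h
    have h1 : HasDerivAt (fun s : ℝ => 1 + s) 1 t := (hasDerivAt_id t).const_add 1
    simpa using h1.rpow_const (p := p) (Or.inl h.ne')
  have hw' : ∀ t : ℝ, 0 < 1 + t →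
      HasDerivAt w (-(K * (β - 1) * (1 + t) ^ (-β))) t := by
    intro t h
    have := (hrpow (1 - β) t h).const_mul K
    have he : (1:ℝ) - β - 1 = -β := by ring
    rw [he] at this
    convert this using 1
    case e'_4 => rfl
    case e'_5 => rfl
    show (-(K * (β - 1) * (1 + t) ^ (-β)) : ℝ) = K * ((1 - β) * (1 + t) ^ (-β))
    ring
  have hΦ' : ∀ t : ℝ, 0 < 1 + t → HasDerivAt Φ (w t) t := by
    intro t h
    have h2 := (hrpow (2 - β) t h)
    have he : (2:ℝ) - β - 1 = 1 - β := by ring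
    rw [he] at h2
    have := ((hasDerivAt_const t (1:ℝ)).sub h2).const_mul (K / (β - 2))
    convert this using 1
    show K * (1 + t) ^ (1 - β) = _
    rw [show K / (β - 2) * (0 - (2 - β) * (1 + t) ^ (1 - β))
        = K / (β - 2) * (β - 2) * (1 + t) ^ (1 - β) by ring,
      div_mul_cancel₀ K hβ2.ne']
    exacts [rfl, rfl, rfl]
  have hwnn : ∀ t : ℝ, 0 < 1 + t → 0 ≤ w t := fun t h =>
    mul_nonneg hKpos.le (Real.rpow_nonneg h.le _)
  -- key pointwise inequality
  have hkey : ∀ t : ℝ, 0 ≤ t →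
      C * (1 + t ^ 2) ^ (-β / 2) ≤ K * (β - 1) * (1 + t) ^ (-β) := by
    intro t ht
    have h1t : (0:ℝ) < 1 + t := hbase t ht
    have h1t2 : (0:ℝ) < 1 + t ^ 2 := by positivity
    have hKb : K * (β - 1) = C * 2 ^ (β / 2) := by
      rw [hKdef, div_mul_cancel₀ _ hβ1.ne']
    rw [hKb]
    have e1 : (1 + t ^ 2) ^ (-β / 2) = ((1 + t ^ 2)⁻¹) ^ (β / 2) := by
      rw [Real.inv_rpow h1t2.le, ← Real.rpow_neg h1t2.le]
      ring_nf
    have e2 : (2:ℝ) ^ (β / 2) * (1 + t) ^ (-β) = (2 * ((1 + t) ^ 2)⁻¹) ^ (β / 2) := by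
      rw [Real.mul_rpow (by norm_num) (by positivity), Real.inv_rpow (by positivity),
        ← Real.rpow_natCast (1 + t) 2, ← Real.rpow_mul h1t.le, ← Real.rpow_neg h1t.le]
      norm_num
      left
      congr 1
      ring
    rw [mul_assoc, e1, e2]
    gcongr C * ?_
    apply Real.rpow_le_rpow (by positivity) _ (by positivity)
    have h2 : (0:ℝ) < (1 + t) ^ 2 := by positivity
    rw [inv_eq_one_div, inv_eq_one_div, mul_one_div, div_le_div_iff₀ h1t2 h2]
    nlinarith [sq_nonneg (t - 1)]
  -- g is antitone on [0, ∞)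
  have hgderiv : ∀ t : ℝ, 0 < 1 + t →
      HasDerivAt g ((deriv b t + (-(K * (β - 1) * (1 + t) ^ (-β)) * a t + w t * deriv a t)) *
        Real.exp (-(Φ t)) + (b t + w t * a t) * (Real.exp (-(Φ t)) * -(w t))) t := by
    intro t h
    have hb' := (hbd t).hasDerivAt
    have ha' := (had t).hasDerivAt
    have hW : HasDerivAt (fun s => b s + w s * a s)
        (deriv b t + (-(K * (β - 1) * (1 + t) ^ (-β)) * a t + w t * deriv a t)) t :=
      hb'.add ((hw' t h).mul ha')
    have hE : HasDerivAt (fun s => Real.exp (-(Φ s))) (Real.exp (-(Φ t)) * -(w t)) t :=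
      ((hΦ' t h).neg).exp
    exact hW.mul hE
  have hgd : ∀ t : ℝ, 0 < 1 + t → DifferentiableAt ℝ g t :=
    fun t h => (hgderiv t h).differentiableAt
  have hganti : AntitoneOn g (Set.Ici 0) := by
    apply antitoneOn_of_deriv_nonpos (convex_Ici 0)
    · exact fun t ht => (hgd t (hbase t ht)).continuousAt.continuousWithinAt
    · intro t ht
      rw [interior_Ici] at ht
      exact (hgd t (by linarith [Set.mem_Ioi.mp ht])).differentiableWithinAt
    · intro t ht
      rw [interior_Ici] at ht
      have ht0 : (0:ℝ) < t := ht
      have h1t : (0:ℝ) < 1 + t := by linarith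
      rw [(hgderiv t h1t).deriv]
      have hE : (0:ℝ) < Real.exp (-(Φ t)) := Real.exp_pos _
      have h1 : deriv b t ≤ K * (β - 1) * (1 + t) ^ (-β) * a t := by
        calc deriv b t ≤ C * (1 + t ^ 2) ^ (-β / 2) * a t := hba t ht0.le
          _ ≤ K * (β - 1) * (1 + t) ^ (-β) * a t :=
            mul_le_mul_of_nonneg_right (hkey t ht0.le) (hann t ht0.le)
      have h2 : w t * deriv a t ≤ w t * b t :=
        mul_le_mul_of_nonneg_left (hab t ht0.le) (hwnn t h1t)
      have h3 : 0 ≤ w t * (w t * a t) :=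
        mul_nonneg (hwnn t h1t) (mul_nonneg (hwnn t h1t) (hann t ht0.le))
      have hX : deriv b t + (-(K * (β - 1) * (1 + t) ^ (-β)) * a t + w t * deriv a t)
          - (b t + w t * a t) * w t ≤ 0 := by nlinarith
      nlinarith
  -- value at 0
  have hg0 : g 0 = b₀ + K * a₀ := by
    simp only [hgdef, hwdef, hΦdef]
    norm_num
    rw [ha0, hb0]
  have ha0nn : 0 ≤ a₀ := ha0 ▸ hann 0 le_rfl
  have hb0nn : 0 ≤ b₀ := hb0 ▸ hbnn 0 le_rfl
  set C₁ : ℝ := (b₀ + K * a₀ + 1) * Real.exp (K / (β - 2)) with hC1def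
  have hC1pos : 0 < C₁ := by positivity
  -- bound for b
  have hbbound : ∀ t : ℝ, 0 ≤ t → b t ≤ C₁ := by
    intro t ht
    have h1t := hbase t ht
    have hgle : g t ≤ b₀ + K * a₀ := hg0 ▸ hganti Set.self_mem_Ici ht ht
    have hΦle : Φ t ≤ K / (β - 2) := by
      have hp : 0 ≤ (1 + t) ^ (2 - β) := Real.rpow_nonneg h1t.le _
      have : (1:ℝ) - (1 + t) ^ (2 - β) ≤ 1 := by linarith
      calc Φ t ≤ K / (β - 2) * 1 :=
          mul_le_mul_of_nonneg_left this (by positivity)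
        _ = K / (β - 2) := mul_one _
    have hE : Real.exp (-(K / (β - 2))) ≤ Real.exp (-(Φ t)) :=
      Real.exp_le_exp.mpr (by linarith)
    have hbt : 0 ≤ b t := hbnn t ht
    have h4 : b t * Real.exp (-(Φ t)) ≤ g t := by
      have : 0 ≤ w t * a t := mul_nonneg (hwnn t h1t) (hann t ht)
      have hEp : (0:ℝ) < Real.exp (-(Φ t)) := Real.exp_pos _
      simp only [hgdef]
      nlinarith
    have h5 : b t * Real.exp (-(K / (β - 2))) ≤ b₀ + K * a₀ := by
      calc b t * Real.exp (-(K / (β - 2))) ≤ b t * Real.exp (-(Φ t)) :=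
          mul_le_mul_of_nonneg_left hE hbt
        _ ≤ g t := h4
        _ ≤ b₀ + K * a₀ := hgle
    have h6 : b t ≤ (b₀ + K * a₀) * Real.exp (K / (β - 2)) := by
      have hEp : (0:ℝ) < Real.exp (K / (β - 2)) := Real.exp_pos _
      rw [Real.exp_neg] at h5
      have := mul_le_mul_of_nonneg_right h5 hEp.le
      rwa [mul_assoc, inv_mul_cancel₀ hEp.ne', mul_one] at this
    calc b t ≤ (b₀ + K * a₀) * Real.exp (K / (β - 2)) := h6
      _ ≤ C₁ := by
          have : (0:ℝ) < Real.exp (K / (β - 2)) := Real.exp_pos _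
          nlinarith
  refine ⟨C₁, 1, hC1pos, one_pos, fun t ht => ⟨hbbound t ht, ?_⟩⟩
  -- linear bound for a
  have hanti : AntitoneOn (fun s => a s - C₁ * s) (Set.Ici 0) := by
    apply antitoneOn_of_deriv_nonpos (convex_Ici 0)
    · exact ((had.continuous.sub (continuous_const.mul continuous_id)).continuousOn)
    · exact (had.sub ((differentiable_const C₁).mul differentiable_id)).differentiableOn
    · intro s hs
      rw [interior_Ici] at hs
      have hs0 : (0:ℝ) < s := hs
      have : deriv (fun s => a s - C₁ * s) s = deriv a s - C₁ := by
        rw [deriv_fun_sub (had s) (by fun_prop), deriv_const_mul _ differentiableAt_id]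
        simp
      rw [this]
      have := hab s hs0.le
      have := hbbound s hs0.le
      linarith
  have := hanti Set.self_mem_Ici ht ht
  simp only [mul_zero, sub_zero, ha0] at this
  linarith
end

section
/- Let β > 2, C > 0, and g : [0,∞) → [0,∞) locally integrable. Suppose a, b : [0,∞) → [0,∞) are differentiable with a(0) = a₀, b(0) = b₀, a'(t) ≤ b(t) and b'(t) ≤ C ⟨t⟩^{-β} a(t) + g(t) for all t ≥ 0, where ⟨t⟩ = √(1+t²). Let G₁(t) = ∫₀ᵗ g(s) ds. Then there exist positive constants C₁, C₂ (depending only on C, β, a₀, b₀) such that b(t) ≤ C₁ + C₂ G₁(t) and a(t) ≤ a₀ + C₁ t + C₂ ∫₀ᵗ G₁(s) ds for all t ≥ 0. -/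
open MeasureTheory

set_option maxHeartbeats 2000000 in

theorem aux_lemma_beta_gt_two (C β a₀ b₀ : ℝ) (hC : 0 < C) (hβ : 2 < β)
    (g : ℝ → ℝ) (hgnn : ∀ t, 0 ≤ t → 0 ≤ g t)
    (hgint : ∀ t, IntervalIntegrable g volume 0 t)
    (a b : ℝ → ℝ) (had : Differentiable ℝ a) (hbd : Differentiable ℝ b)
    (hann : ∀ t, 0 ≤ t → 0 ≤ a t) (hbnn : ∀ t, 0 ≤ t → 0 ≤ b t)
    (ha0 : a 0 = a₀) (hb0 : b 0 = b₀)
    (hab : ∀ t, 0 ≤ t → deriv a t ≤ b t)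
    (hba : ∀ t, 0 ≤ t → deriv b t ≤ C * (Real.sqrt (1 + t ^ 2)) ^ (-β) * a t + g t) :
    ∃ C₁ C₂ : ℝ, 0 < C₁ ∧ 0 < C₂ ∧
      ∀ t, 0 ≤ t →
        b t ≤ C₁ + C₂ * (∫ s in (0:ℝ)..t, g s) ∧
        a t ≤ a₀ + C₁ * t + C₂ * (∫ s in (0:ℝ)..t, ∫ r in (0:ℝ)..s, g r) := by
  have hβ1 : (0:ℝ) < β - 1 := by linarith
  have hβ2 : (0:ℝ) < β - 2 := by linarith
  set K : ℝ := C / (β - 1) with hKdef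
  have hK : 0 < K := div_pos hC hβ1
  have hKβ : K * (β - 1) = C := by rw [hKdef]; field_simp
  clear_value K
  have hP : ∀ t : ℝ, (0:ℝ) < 1 + t ^ 2 := fun t => by positivity
  have hP1 : ∀ t : ℝ, (1:ℝ) ≤ 1 + t ^ 2 := fun t => le_add_of_nonneg_right (sq_nonneg t)
  -- ψ and its basic properties
  set ψ : ℝ → ℝ := fun s => (1 + s ^ 2) ^ ((1 - β) / 2) with hψdef
  have hψpos : ∀ s, 0 < ψ s := fun s => Real.rpow_pos_of_pos (hP s) _
  have hψcont : Continuous ψ := by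
    rw [hψdef]
    exact (continuous_const.add (continuous_pow 2)).rpow_const fun t => Or.inl (hP t).ne'
  have hψle1 : ∀ s, ψ s ≤ 1 := fun s =>
    Real.rpow_le_one_of_one_le_of_nonpos (hP1 s) (by linarith)
  clear_value ψ
  set ε : ℝ → ℝ := fun t => K * ψ t with hεdef
  have hεpos : ∀ t, 0 < ε t := fun t => mul_pos hK (hψpos t)
  have hεcont : Continuous ε := by rw [hεdef]; exact continuous_const.mul hψcont
  clear_value ε
  set h : ℝ → ℝ := fun t => (β - 1) / (1 + t ^ 2) + ε t with hhdef
  have hhpos : ∀ t, 0 < h t := fun t => add_pos (div_pos hβ1 (hP t)) (hεpos t)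
  have hhcont : Continuous h := by
    rw [hhdef]
    exact (continuous_const.div (continuous_const.add (continuous_pow 2)) fun t => (hP t).ne').add hεcont
  clear_value h
  -- derivative of ε
  have hPd : ∀ t : ℝ, HasDerivAt (fun t : ℝ => 1 + t ^ 2) (2 * t) t := by
    intro t
    simpa using (hasDerivAt_pow 2 t).const_add 1
  set ε' : ℝ → ℝ := fun t => K * (2 * t * ((1 - β) / 2) * (1 + t ^ 2) ^ ((1 - β) / 2 - 1))
    with hε'def
  have hεd : ∀ t : ℝ, HasDerivAt ε (ε' t) t := by
    intro t
    rw [hεdef, hε'def]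
    have := ((hPd t).rpow_const (p := (1 - β) / 2) (Or.inl (hP t).ne')).const_mul K
    simpa [hψdef] using this
  clear_value ε'
  -- key coefficient inequality
  have hcoeff : ∀ t : ℝ, 0 ≤ t →
      ε' t + C * (1 + t ^ 2) ^ (-β / 2) ≤ (β - 1) / (1 + t ^ 2) * ε t := by
    intro t ht
    have hQpos : (0:ℝ) < (1 + t ^ 2) ^ ((1 - β) / 2 - 1) := Real.rpow_pos_of_pos (hP t) _
    have e1 : ((1:ℝ) + t ^ 2) ^ ((1 - β) / 2 - 1) = (1 + t ^ 2) ^ ((1 - β) / 2) / (1 + t ^ 2) := by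
      rw [Real.rpow_sub (hP t), Real.rpow_one]
    have hrhs : (β - 1) / (1 + t ^ 2) * ε t = K * (β - 1) * (1 + t ^ 2) ^ ((1 - β) / 2 - 1) := by
      rw [hεdef, hψdef, e1]
      field_simp
    have e2 : ((1:ℝ) + t ^ 2) ^ (-β / 2) =
        (1 + t ^ 2) ^ ((1:ℝ) / 2) * (1 + t ^ 2) ^ ((1 - β) / 2 - 1) := by
      rw [← Real.rpow_add (hP t)]
      congr 1
      ring
    have hsq : ((1:ℝ) + t ^ 2) ^ ((1:ℝ) / 2) ≤ 1 + t := by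
      rw [← Real.sqrt_eq_rpow]
      calc Real.sqrt (1 + t ^ 2) ≤ Real.sqrt ((1 + t) ^ 2) :=
            Real.sqrt_le_sqrt (by nlinarith)
        _ = 1 + t := Real.sqrt_sq (by linarith)
    have hXle : C * ((1:ℝ) + t ^ 2) ^ (-β / 2) ≤
        C * ((1 + t) * (1 + t ^ 2) ^ ((1 - β) / 2 - 1)) := by
      rw [e2]
      exact mul_le_mul_of_nonneg_left (mul_le_mul_of_nonneg_right hsq hQpos.le) hC.le
    have h6 : K * (1 - β) * (t * (1 + t ^ 2) ^ ((1 - β) / 2 - 1)) =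
        -C * (t * (1 + t ^ 2) ^ ((1 - β) / 2 - 1)) := by
      have : K * (1 - β) = -C := by linarith [hKβ]
      rw [this]
    have h7 : K * (β - 1) * ((1 + t ^ 2) ^ ((1 - β) / 2 - 1)) =
        C * ((1 + t ^ 2) ^ ((1 - β) / 2 - 1)) := by rw [hKβ]
    rw [hrhs, hε'def]
    nlinarith [hXle, h6, h7]
  -- the functional L and its derivative bound
  set L : ℝ → ℝ := fun t => ε t * a t + b t with hLdef
  have hLd : ∀ t : ℝ, HasDerivAt L (ε' t * a t + ε t * deriv a t + deriv b t) t := by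
    intro t
    rw [hLdef]
    exact ((hεd t).mul (had t).hasDerivAt).add (hbd t).hasDerivAt
  have hLnn : ∀ t, 0 ≤ t → 0 ≤ L t := by
    intro t ht
    rw [hLdef]
    exact add_nonneg (mul_nonneg (hεpos t).le (hann t ht)) (hbnn t ht)
  have hεaleL : ∀ t, 0 ≤ t → ε t * a t ≤ L t := by
    intro t ht; rw [hLdef]; simp only; nlinarith [hbnn t ht]
  have hbleL : ∀ t, 0 ≤ t → b t ≤ L t := by
    intro t ht; rw [hLdef]; simp only; nlinarith [mul_nonneg (hεpos t).le (hann t ht)]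
  clear_value L
  have hsqrt_rpow : ∀ t : ℝ, (Real.sqrt (1 + t ^ 2)) ^ (-β) = (1 + t ^ 2) ^ (-β / 2) := by
    intro t
    rw [Real.sqrt_eq_rpow, ← Real.rpow_mul (hP t).le]
    congr 1
    ring
  have hLderiv_le : ∀ t : ℝ, 0 ≤ t →
      ε' t * a t + ε t * deriv a t + deriv b t ≤ h t * L t + g t := by
    intro t ht
    have h1 : deriv b t ≤ C * (1 + t ^ 2) ^ (-β / 2) * a t + g t := by
      have := hba t ht
      rwa [hsqrt_rpow t] at this
    have h2 : ε t * deriv a t ≤ ε t * b t :=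
      mul_le_mul_of_nonneg_left (hab t ht) (hεpos t).le
    have h3 : (ε' t + C * (1 + t ^ 2) ^ (-β / 2)) * a t ≤ (β - 1) / (1 + t ^ 2) * ε t * a t :=
      mul_le_mul_of_nonneg_right (hcoeff t ht) (hann t ht)
    have h4 : (β - 1) / (1 + t ^ 2) * (ε t * a t) ≤ (β - 1) / (1 + t ^ 2) * L t :=
      mul_le_mul_of_nonneg_left (hεaleL t ht) (div_pos hβ1 (hP t)).le
    have h5 : ε t * b t ≤ ε t * L t :=
      mul_le_mul_of_nonneg_left (hbleL t ht) (hεpos t).le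
    have hgoal : h t * L t + g t = (β - 1) / (1 + t ^ 2) * L t + ε t * L t + g t := by
      rw [hhdef]; ring
    rw [hgoal]
    nlinarith [h1, h2, h3, h4, h5]
  -- the integral H of h
  set H : ℝ → ℝ := fun t => ∫ s in (0:ℝ)..t, h s with hHdef
  have hHd : ∀ t : ℝ, HasDerivAt H (h t) t := by
    intro t
    rw [hHdef]
    exact intervalIntegral.integral_hasDerivAt_right (hhcont.intervalIntegrable _ _)
      (hhcont.stronglyMeasurableAtFilter _ _) hhcont.continuousAt
  have hHnn : ∀ t, 0 ≤ t → 0 ≤ H t := by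
    intro t ht
    rw [hHdef]
    exact intervalIntegral.integral_nonneg ht fun u _ => (hhpos u).le
  have hH0 : H 0 = 0 := by rw [hHdef]; exact intervalIntegral.integral_same
  -- bound on the integral of ψ
  have hψint : ∀ t : ℝ, 0 ≤ t → (∫ s in (0:ℝ)..t, ψ s) ≤ 1 + 1 / (β - 2) := by
    intro t ht
    have hinv : (0:ℝ) ≤ 1 / (β - 2) := by positivity
    rcases le_or_gt t 1 with h1 | h1
    · calc (∫ s in (0:ℝ)..t, ψ s) ≤ ∫ _ in (0:ℝ)..t, (1:ℝ) :=
            intervalIntegral.integral_mono_on ht (hψcont.intervalIntegrable _ _)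
              intervalIntegrable_const (fun s _ => hψle1 s)
        _ = t := by simp
        _ ≤ 1 + 1 / (β - 2) := by linarith
    · have hsplit : (∫ s in (0:ℝ)..t, ψ s) =
          (∫ s in (0:ℝ)..(1:ℝ), ψ s) + ∫ s in (1:ℝ)..t, ψ s :=
        (intervalIntegral.integral_add_adjacent_intervals (hψcont.intervalIntegrable _ _)
          (hψcont.intervalIntegrable _ _)).symm
      have hpart1 : (∫ s in (0:ℝ)..(1:ℝ), ψ s) ≤ 1 := by
        calc (∫ s in (0:ℝ)..(1:ℝ), ψ s) ≤ ∫ _ in (0:ℝ)..(1:ℝ), (1:ℝ) :=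
              intervalIntegral.integral_mono_on zero_le_one (hψcont.intervalIntegrable _ _)
                intervalIntegrable_const (fun s _ => hψle1 s)
          _ = 1 := by simp
      have hrint : IntervalIntegrable (fun s : ℝ => s ^ (1 - β)) volume 1 t := by
        apply ContinuousOn.intervalIntegrable
        apply ContinuousOn.rpow_const continuousOn_id
        intro s hs
        rw [Set.uIcc_of_le h1.le] at hs
        refine Or.inl ?_
        intro h0
        simp only [id_eq] at h0
        rw [h0] at hs
        exact absurd hs.1 (by norm_num)
      have hpart2 : (∫ s in (1:ℝ)..t, ψ s) ≤ ∫ s in (1:ℝ)..t, s ^ (1 - β) := by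
        apply intervalIntegral.integral_mono_on h1.le (hψcont.intervalIntegrable _ _) hrint
        intro s hs
        have hs1 : (1:ℝ) ≤ s := hs.1
        have hs0 : (0:ℝ) < s := by linarith
        have e : (s:ℝ) ^ (1 - β) = (s ^ 2) ^ ((1 - β) / 2) := by
          rw [← Real.rpow_natCast s 2, ← Real.rpow_mul hs0.le]
          congr 1
          push_cast
          ring
        rw [hψdef]
        simp only
        rw [e]
        exact Real.rpow_le_rpow_of_nonpos (by positivity) (by nlinarith) (by linarith)
      have hval : (∫ s in (1:ℝ)..t, s ^ (1 - β)) = (t ^ (2 - β) - 1) / (2 - β) := by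
        rw [integral_rpow (Or.inr ⟨by intro hc; linarith,
          by rw [Set.uIcc_of_le h1.le]; intro hc; linarith [hc.1]⟩)]
        rw [Real.one_rpow]
        have e4 : (1:ℝ) - β + 1 = 2 - β := by ring
        rw [e4]
      have hpart3 : (t ^ (2 - β) - 1) / (2 - β) ≤ 1 / (β - 2) := by
        have hx : (0:ℝ) ≤ t ^ (2 - β) := Real.rpow_nonneg ht _
        have e3 : (t ^ (2 - β) - 1) / (2 - β) = (1 - t ^ (2 - β)) / (β - 2) := by
          rw [div_eq_div_iff (by linarith) (by linarith)]
          ring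
        rw [e3]
        gcongr
        linarith
      linarith [hsplit, hpart1, hpart2, hval.le, hval.ge, hpart3]
  -- bound on H
  set Hmax : ℝ := (β - 1) * (Real.pi / 2) + K * (1 + 1 / (β - 2)) with hHmaxdef
  have hHle : ∀ t : ℝ, 0 ≤ t → H t ≤ Hmax := by
    intro t ht
    have c1 : Continuous fun s : ℝ => (β - 1) * (1 + s ^ 2)⁻¹ :=
      continuous_const.mul ((continuous_const.add (continuous_pow 2)).inv₀
        fun s => (hP s).ne')
    have hsplit : H t = (∫ s in (0:ℝ)..t, (β - 1) * (1 + s ^ 2)⁻¹) + ∫ s in (0:ℝ)..t, ε s := by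
      rw [hHdef, hhdef]
      simp only [div_eq_mul_inv]
      exact intervalIntegral.integral_add (c1.intervalIntegrable _ _)
        (hεcont.intervalIntegrable _ _)
    have hpartA : (∫ s in (0:ℝ)..t, (β - 1) * (1 + s ^ 2)⁻¹) ≤ (β - 1) * (Real.pi / 2) := by
      rw [intervalIntegral.integral_const_mul, integral_inv_one_add_sq]
      apply mul_le_mul_of_nonneg_left _ hβ1.le
      rw [Real.arctan_zero, sub_zero]
      exact (Real.arctan_lt_pi_div_two t).le
    have hpartB : (∫ s in (0:ℝ)..t, ε s) ≤ K * (1 + 1 / (β - 2)) := by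
      rw [hεdef]
      rw [intervalIntegral.integral_const_mul]
      exact mul_le_mul_of_nonneg_left (hψint t ht) hK.le
    rw [hHmaxdef]
    linarith [hsplit, hpartA, hpartB]
  clear_value H Hmax
  -- Gronwall via F = exp(-H) * L
  set F : ℝ → ℝ := fun t => Real.exp (-H t) * L t with hFdef
  have hFd : ∀ t : ℝ, HasDerivAt F
      (Real.exp (-H t) * -h t * L t +
        Real.exp (-H t) * (ε' t * a t + ε t * deriv a t + deriv b t)) t := by
    intro t
    rw [hFdef]
    exact ((hHd t).neg.exp.mul (hLd t))
  have hFderiv_le : ∀ t : ℝ, 0 ≤ t →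
      Real.exp (-H t) * -h t * L t +
        Real.exp (-H t) * (ε' t * a t + ε t * deriv a t + deriv b t) ≤ g t := by
    intro t ht
    have he : Real.exp (-H t) ≤ 1 := by
      rw [Real.exp_le_one_iff]
      linarith [hHnn t ht]
    have hepos : 0 < Real.exp (-H t) := Real.exp_pos _
    have h2 : Real.exp (-H t) * (ε' t * a t + ε t * deriv a t + deriv b t) ≤
        Real.exp (-H t) * (h t * L t + g t) :=
      mul_le_mul_of_nonneg_left (hLderiv_le t ht) hepos.le
    have h3 : Real.exp (-H t) * g t ≤ g t := by
      nlinarith [hgnn t ht]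
    nlinarith [h2, h3]
  clear_value F
  have hG₁cont : Continuous (fun s => ∫ r in (0:ℝ)..s, g r) := by
    apply intervalIntegral.continuous_primitive
    intro u v
    exact (hgint u).symm.trans (hgint v)
  have hFle : ∀ t : ℝ, 0 ≤ t → F t ≤ (K * a₀ + b₀) + ∫ s in (0:ℝ)..t, g s := by
    intro t ht
    have key : F t - F 0 ≤ ∫ s in (0:ℝ)..t, g s := by
      apply intervalIntegral.sub_le_integral_of_hasDeriv_right_of_le ht
      · exact Continuous.continuousOn
          (continuous_iff_continuousAt.mpr fun x => (hFd x).continuousAt)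
      · intro x hx
        exact (hFd x).hasDerivWithinAt
      · exact (intervalIntegrable_iff_integrableOn_Icc_of_le ht).mp (hgint t)
      · intro x hx
        exact hFderiv_le x hx.1.le
    have hF0 : F 0 = K * a₀ + b₀ := by
      rw [hFdef]
      simp only [hH0, neg_zero, Real.exp_zero, one_mul, hLdef, hεdef, hψdef, ha0, hb0]
      norm_num
    linarith [key, hF0.le, hF0.ge]
  -- bound on b
  set C₂ : ℝ := Real.exp Hmax with hC₂def
  have hC₂pos : 0 < C₂ := Real.exp_pos _
  have ha₀nn : 0 ≤ a₀ := ha0 ▸ hann 0 le_rfl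
  have hb₀nn : 0 ≤ b₀ := hb0 ▸ hbnn 0 le_rfl
  set C₁ : ℝ := C₂ * (K * a₀ + b₀) + 1 with hC₁def
  have hC₁pos : 0 < C₁ := by positivity
  clear_value C₁ C₂
  have hbbound : ∀ t : ℝ, 0 ≤ t → b t ≤ C₁ + C₂ * ∫ s in (0:ℝ)..t, g s := by
    intro t ht
    have h2 : L t = Real.exp (H t) * F t := by
      rw [hFdef]
      rw [← mul_assoc, ← Real.exp_add]
      simp
    have hFnn : 0 ≤ F t := by
      rw [hFdef]
      exact mul_nonneg (Real.exp_pos _).le (hLnn t ht)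
    have h3 : Real.exp (H t) * F t ≤ C₂ * F t := by
      rw [hC₂def]
      exact mul_le_mul_of_nonneg_right (Real.exp_le_exp.mpr (hHle t ht)) hFnn
    have h4 : C₂ * F t ≤ C₂ * ((K * a₀ + b₀) + ∫ s in (0:ℝ)..t, g s) :=
      mul_le_mul_of_nonneg_left (hFle t ht) hC₂pos.le
    calc b t ≤ L t := hbleL t ht
      _ = Real.exp (H t) * F t := h2
      _ ≤ C₂ * F t := h3
      _ ≤ C₂ * ((K * a₀ + b₀) + ∫ s in (0:ℝ)..t, g s) := h4
      _ ≤ C₁ + C₂ * ∫ s in (0:ℝ)..t, g s := by rw [hC₁def]; ring_nf; linarith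
  refine ⟨C₁, C₂, hC₁pos, hC₂pos, fun t ht => ⟨hbbound t ht, ?_⟩⟩
  -- bound on a
  have key : a t - a 0 ≤ ∫ s in (0:ℝ)..t, (C₁ + C₂ * ∫ r in (0:ℝ)..s, g r) := by
    apply intervalIntegral.sub_le_integral_of_hasDeriv_right_of_le ht
      had.continuous.continuousOn
      (fun x _ => (had x).hasDerivAt.hasDerivWithinAt)
    · exact (continuous_const.add (continuous_const.mul hG₁cont)).integrableOn_Icc
    · intro x hx
      exact le_trans (hab x hx.1.le) (hbbound x hx.1.le)
  have hsplit : (∫ s in (0:ℝ)..t, (C₁ + C₂ * ∫ r in (0:ℝ)..s, g r)) =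
      C₁ * t + C₂ * ∫ s in (0:ℝ)..t, ∫ r in (0:ℝ)..s, g r := by
    rw [intervalIntegral.integral_add (f := fun _ => C₁) (g := fun s => C₂ * ∫ r in (0:ℝ)..s, g r)
      (intervalIntegrable_const)
      ((continuous_const.mul hG₁cont).intervalIntegrable _ _),
      intervalIntegral.integral_const, intervalIntegral.integral_const_mul]
    simp [mul_comm]
  rw [ha0] at key
  linarith [key, hsplit.le, hsplit.ge]
end

section
/- Suppose u : [0,T] → [0,∞) is differentiable with u(0) = 0 and u'(t) ≤ -u(t) log u(t) + 1/N for all t ∈ [0,T], where N ≥ 1 (with the convention 0·log 0 = 0). Define v(t) = u(t) N^{e^{-t}}. Then v(0) = 0 and v'(t) ≤ -v(t) log v(t) + 1 ≤ 1 + 1/e for all t ∈ [0,T], and consequently u(t) ≤ (1 + 1/e) t · N^{-e^{-t}} for all t ∈ [0,T]. -/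
lemma neg_mul_log_le_aux (x : ℝ) (hx : 0 ≤ x) : -x * Real.log x ≤ 1 / Real.exp 1 := by
  rcases eq_or_lt_of_le hx with h | h
  · rw [← h]; simp; positivity
  · have he : (0:ℝ) < Real.exp 1 := Real.exp_pos 1
    have h1 : (0:ℝ) < 1 / (Real.exp 1 * x) := by positivity
    have h2 := Real.log_le_sub_one_of_pos h1
    rw [one_div, Real.log_inv, Real.log_mul (ne_of_gt he) (ne_of_gt h), Real.log_exp] at h2
    have h3 : -Real.log x ≤ (Real.exp 1 * x)⁻¹ := by linarith
    have h4 := mul_le_mul_of_nonneg_left h3 (le_of_lt h)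
    calc -x * Real.log x = x * (-Real.log x) := by ring
      _ ≤ x * (Real.exp 1 * x)⁻¹ := h4
      _ = 1 / Real.exp 1 := by field_simp

theorem log_gronwall_ode_lemma (T N : ℝ) (hT : 0 < T) (hN : 1 ≤ N)
    (u : ℝ → ℝ) (hu : Differentiable ℝ u)
    (hunn : ∀ t ∈ Set.Icc 0 T, 0 ≤ u t) (hu0 : u 0 = 0)
    (hu' : ∀ t ∈ Set.Icc 0 T, deriv u t ≤ -u t * Real.log (u t) + 1 / N)
    (v : ℝ → ℝ) (hv : v = fun t => u t * N ^ Real.exp (-t)) :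
    v 0 = 0 ∧
    (∀ t ∈ Set.Icc 0 T,
        deriv v t ≤ -v t * Real.log (v t) + 1 ∧
        -v t * Real.log (v t) + 1 ≤ 1 + 1 / Real.exp 1) ∧
    ∀ t ∈ Set.Icc 0 T, u t ≤ (1 + 1 / Real.exp 1) * t * N ^ (-Real.exp (-t)) := by
  have hN0 : (0:ℝ) < N := lt_of_lt_of_le one_pos hN
  have hlogN : 0 ≤ Real.log N := Real.log_nonneg hN
  set w : ℝ → ℝ := fun t => Real.exp (Real.exp (-t) * Real.log N) with hw
  have hveq : v = fun t => u t * w t := by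
    rw [hv]; funext t
    rw [Real.rpow_def_of_pos hN0, mul_comm (Real.log N)]
  have hwpos : ∀ t, 0 < w t := fun t => Real.exp_pos _
  have hwderiv : ∀ t, HasDerivAt w (w t * (-Real.exp (-t) * Real.log N)) t := by
    intro t
    have h1 : HasDerivAt (fun t : ℝ => -t) (-1) t := (hasDerivAt_id t).neg
    have h2 : HasDerivAt (fun t : ℝ => Real.exp (-t)) (Real.exp (-t) * (-1)) t := h1.exp
    have h3 : HasDerivAt (fun t : ℝ => Real.exp (-t) * Real.log N)
        (Real.exp (-t) * (-1) * Real.log N) t := h2.mul_const _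
    have h4 := h3.exp
    convert h4 using 1
    simp only [hw]; ring
  have hvderiv : ∀ t, HasDerivAt v
      (deriv u t * w t + u t * (w t * (-Real.exp (-t) * Real.log N))) t := by
    intro t
    rw [hveq]
    exact ((hu t).hasDerivAt).mul (hwderiv t)
  have hvdiff : Differentiable ℝ v := fun t => (hvderiv t).differentiableAt
  have hv0 : v 0 = 0 := by simp only [hveq, hu0, zero_mul]
  have key : ∀ t ∈ Set.Icc 0 T,
      deriv v t ≤ -v t * Real.log (v t) + 1 ∧
      -v t * Real.log (v t) + 1 ≤ 1 + 1 / Real.exp 1 := by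
    intro t ht
    have ht0 : 0 ≤ t := ht.1
    have hut : 0 ≤ u t := hunn t ht
    have hwt : w t ≤ N := by
      have he1 : Real.exp (-t) ≤ 1 := Real.exp_le_one_iff.2 (by linarith)
      calc w t ≤ Real.exp (Real.log N) := by
            apply Real.exp_le_exp.2
            nlinarith
        _ = N := Real.exp_log hN0
    have hid : w t * (-u t * Real.log (u t)) + u t * (w t * (-Real.exp (-t) * Real.log N))
        = -v t * Real.log (v t) := by
      simp only [hveq]
      rcases eq_or_lt_of_le hut with h | h
      · rw [← h]; simp
      · rw [Real.log_mul (ne_of_gt h) (ne_of_gt (hwpos t)), hw, Real.log_exp]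
        ring
    constructor
    · rw [(hvderiv t).deriv]
      have h5 := hu' t ht
      have h6 : deriv u t * w t ≤ (-u t * Real.log (u t) + 1/N) * w t :=
        mul_le_mul_of_nonneg_right h5 (le_of_lt (hwpos t))
      have h7 : w t / N ≤ 1 := (div_le_one hN0).2 hwt
      have e1 : (-u t * Real.log (u t) + 1/N) * w t
          = w t * (-u t * Real.log (u t)) + w t / N := by ring
      linarith
    · have hvt : 0 ≤ v t := by
        rw [hveq]; exact mul_nonneg hut (le_of_lt (hwpos t))
      have := neg_mul_log_le_aux (v t) hvt
      linarith
  refine ⟨hv0, key, ?_⟩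
  intro t ht
  set g : ℝ → ℝ := fun x => (1 + 1/Real.exp 1) * x - v x with hg
  have hgderiv : ∀ x, HasDerivAt g ((1 + 1/Real.exp 1) * 1 - deriv v x) x := by
    intro x
    exact ((hasDerivAt_id x).const_mul _).sub (hvdiff x).hasDerivAt
  have hgmono : MonotoneOn g (Set.Icc 0 T) := by
    apply monotoneOn_of_deriv_nonneg (convex_Icc 0 T)
    · exact (Continuous.sub (continuous_const.mul continuous_id) hvdiff.continuous).continuousOn
    · intro x hx
      exact ((hgderiv x).differentiableAt).differentiableWithinAt
    · intro x hx
      rw [interior_Icc] at hx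
      rw [(hgderiv x).deriv]
      have hb := key x ⟨le_of_lt hx.1, le_of_lt hx.2⟩
      have := le_trans hb.1 hb.2
      linarith
  have h8 : g 0 ≤ g t := hgmono ⟨le_refl 0, le_of_lt hT⟩ ht ht.1
  have h9 : v t ≤ (1 + 1/Real.exp 1) * t := by
    have hg0 : g 0 = 0 := by simp [hg, hv0]
    rw [hg0] at h8
    simp only [hg] at h8
    linarith
  have h10 : N ^ (-Real.exp (-t)) = 1 / w t := by
    rw [Real.rpow_def_of_pos hN0, hw, one_div, ← Real.exp_neg]
    congr 1
    ring
  have h11 : u t = v t / w t := by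
    rw [hveq]
    exact (mul_div_cancel_right₀ _ (hwpos t).ne').symm
  rw [h11, h10]
  rw [mul_one_div, div_le_div_iff₀ (hwpos t) (hwpos t)]
  nlinarith [hwpos t]
end
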